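/- arXiv:2508.10776 — 4 statements merged into one kernel-verified Lean document; each statement's English description precedes it below -/
import Mathlib

section
/- Let Σ be a symmetric positive definite n×n real matrix, 𝟙 ∈ ℝⁿ the all-ones vector, D = 𝟙ᵀΣ⁻¹𝟙 and w = Σ⁻¹𝟙 / D. The GMVP map G : A ↦ A⁻¹𝟙 / (𝟙ᵀA⁻¹𝟙), defined on n×n real matrices, is Fréchet differentiable at Σ, and its derivative in an arbitrary direction H (an n×n matrix) is given by D_Σ G [H] = −Σ⁻¹ H w + D (wᵀ H w) w. -/
set_option maxHeartbeats 1000000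


open Matrix

noncomputable section

attribute [local instance] Matrix.normedAddCommGroup Matrix.normedSpace

/-- The all-ones vector in ℝⁿ. -/
def ones (n : ℕ) : Fin n → ℝ := fun _ => 1

/-- `D = 𝟙ᵀ Σ⁻¹ 𝟙`. -/
def Dcoef (n : ℕ) (S : Matrix (Fin n) (Fin n) ℝ) : ℝ :=
  ones n ⬝ᵥ (S⁻¹ *ᵥ ones n)

/-- The GMVP map `G : A ↦ A⁻¹𝟙 / (𝟙ᵀA⁻¹𝟙)`. -/
def gmvp (n : ℕ) (S : Matrix (Fin n) (Fin n) ℝ) : Fin n → ℝ :=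
  (Dcoef n S)⁻¹ • (S⁻¹ *ᵥ ones n)

namespace GmvpAux

variable {n : ℕ}

lemma norm_mul_le' (A B : Matrix (Fin n) (Fin n) ℝ) : ‖A * B‖ ≤ n * ‖A‖ * ‖B‖ := by
  rw [Matrix.norm_le_iff (by positivity)]
  intro i j
  calc ‖(A * B) i j‖ = ‖∑ k, A i k * B k j‖ := by rw [Matrix.mul_apply]
    _ ≤ ∑ k, ‖A i k * B k j‖ := norm_sum_le _ _
    _ ≤ ∑ _k : Fin n, ‖A‖ * ‖B‖ := by
        refine Finset.sum_le_sum fun k _ => ?_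
        rw [norm_mul]
        exact mul_le_mul (A.norm_entry_le_entrywise_sup_norm)
          (B.norm_entry_le_entrywise_sup_norm) (norm_nonneg _) (norm_nonneg _)
    _ = n * ‖A‖ * ‖B‖ := by
        simp [Finset.sum_const, Finset.card_univ]; ring

/-- The derivative of matrix inversion, `H ↦ -(S⁻¹ H S⁻¹)`, as a continuous linear map. -/
def invDeriv (S : Matrix (Fin n) (Fin n) ℝ) :
    Matrix (Fin n) (Fin n) ℝ →L[ℝ] Matrix (Fin n) (Fin n) ℝ :=
  LinearMap.toContinuousLinearMap
    { toFun := fun H => -(S⁻¹ * H * S⁻¹)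
      map_add' := by intro x y; simp [Matrix.mul_add, Matrix.add_mul]; abel
      map_smul' := by intro c x; simp [Matrix.mul_smul, Matrix.smul_mul] }

@[simp] lemma invDeriv_apply (S H : Matrix (Fin n) (Fin n) ℝ) :
    invDeriv S H = -(S⁻¹ * H * S⁻¹) :=
  congrFun (LinearMap.coe_toContinuousLinearMap' _) H

lemma matinv_hasFDerivAt (S : Matrix (Fin n) (Fin n) ℝ) (hS : IsUnit S) :
    HasFDerivAt (fun A : Matrix (Fin n) (Fin n) ℝ => A⁻¹) (invDeriv S) S := by
  have hdet : S.det ≠ 0 := by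
    intro h
    rw [Matrix.isUnit_iff_isUnit_det, h] at hS
    exact hS.ne_zero rfl
  refine hasFDerivAt_iff_isLittleO_nhds_zero.2 ?_
  -- eventually S + h is invertible
  have hcont : ContinuousAt (fun h : Matrix (Fin n) (Fin n) ℝ => (S + h).det) 0 :=
    ((continuous_const.add continuous_id).matrix_det).continuousAt
  have hdet0 : (S + (0 : Matrix (Fin n) (Fin n) ℝ)).det = S.det := by simp
  have hEv1 : ∀ᶠ h in nhds (0 : Matrix (Fin n) (Fin n) ℝ), (S + h).det ≠ 0 := by
    have := hcont.eventually_ne (by rw [hdet0]; exact hdet)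
    exact this
  -- continuity of h ↦ (S + h)⁻¹ at 0
  have hinvcont : ContinuousAt (fun h : Matrix (Fin n) (Fin n) ℝ => (S + h)⁻¹) 0 := by
    have h1 : ContinuousAt (Inv.inv : Matrix (Fin n) (Fin n) ℝ → _) S := by
      apply continuousAt_matrix_inv
      rw [Ring.inverse_eq_inv']
      exact continuousAt_inv₀ hdet
    have h2 : ContinuousAt (fun h : Matrix (Fin n) (Fin n) ℝ => S + h) 0 :=
      (continuous_const.add continuous_id).continuousAt
    have h1' : ContinuousAt (Inv.inv : Matrix (Fin n) (Fin n) ℝ → _)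
        ((fun h : Matrix (Fin n) (Fin n) ℝ => S + h) 0) := by simpa using h1
    have := h1'.comp h2
    exact this
  have hEv2 : ∀ᶠ h in nhds (0 : Matrix (Fin n) (Fin n) ℝ), ‖(S + h)⁻¹‖ ≤ ‖S⁻¹‖ + 1 := by
    have : Filter.Tendsto (fun h : Matrix (Fin n) (Fin n) ℝ => ‖(S + h)⁻¹‖)
        (nhds 0) (nhds ‖(S + (0:Matrix (Fin n) (Fin n) ℝ))⁻¹‖) := hinvcont.norm.tendsto
    simp only [add_zero] at this
    exact this.eventually_le_const (by linarith)
  -- big-O bound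
  have hBO : (fun h : Matrix (Fin n) (Fin n) ℝ => (S + h)⁻¹ - S⁻¹ - invDeriv S h)
      =O[nhds 0] fun h => ‖h‖ ^ 2 := by
    rw [Asymptotics.isBigO_iff]
    refine ⟨(n : ℝ)^4 * ‖S⁻¹‖ * ‖S⁻¹‖ * (‖S⁻¹‖ + 1), ?_⟩
    filter_upwards [hEv1, hEv2] with h h1 h2
    have hSh : IsUnit (S + h) := (Matrix.isUnit_iff_isUnit_det _).2 h1.isUnit
    -- key algebraic identity
    have key : (S + h)⁻¹ - S⁻¹ - invDeriv S h = S⁻¹ * h * S⁻¹ * h * (S + h)⁻¹ := by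
      have hSi' : S⁻¹ * S = 1 := Matrix.nonsing_inv_mul _ ((Matrix.isUnit_iff_isUnit_det _).1 hS)
      have hShi : (S + h) * (S + h)⁻¹ = 1 := Matrix.mul_nonsing_inv _ h1.isUnit
      have e1 : S⁻¹ - (S + h)⁻¹ = S⁻¹ * h * (S + h)⁻¹ := by
        have e0 : S⁻¹ * ((S + h) * (S + h)⁻¹) - (S⁻¹ * S) * (S + h)⁻¹
            = S⁻¹ * h * (S + h)⁻¹ := by noncomm_ring
        rw [hShi, hSi'] at e0
        simpa using e0
      have e2 : (S + h)⁻¹ - S⁻¹ = -(S⁻¹ * h * (S + h)⁻¹) := by rw [← e1]; abel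
      rw [invDeriv_apply, e2]
      have e3 : -(S⁻¹ * h * (S + h)⁻¹) - -(S⁻¹ * h * S⁻¹)
          = S⁻¹ * h * (S⁻¹ - (S + h)⁻¹) := by noncomm_ring
      rw [e3, e1]
      noncomm_ring
    rw [key]
    have b1 : ‖S⁻¹ * h * S⁻¹ * h * (S + h)⁻¹‖ ≤
        (n:ℝ) * ‖S⁻¹ * h * S⁻¹ * h‖ * ‖(S + h)⁻¹‖ := norm_mul_le' _ _
    have b2 : ‖S⁻¹ * h * S⁻¹ * h‖ ≤ (n:ℝ) * ‖S⁻¹ * h * S⁻¹‖ * ‖h‖ := norm_mul_le' _ _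
    have b3 : ‖S⁻¹ * h * S⁻¹‖ ≤ (n:ℝ) * ‖S⁻¹ * h‖ * ‖S⁻¹‖ := norm_mul_le' _ _
    have b4 : ‖S⁻¹ * h‖ ≤ (n:ℝ) * ‖S⁻¹‖ * ‖h‖ := norm_mul_le' _ _
    have hn0 : (0:ℝ) ≤ (n:ℝ) := Nat.cast_nonneg _
    have c3 : ‖S⁻¹ * h * S⁻¹‖ ≤ (n:ℝ)^2 * ‖S⁻¹‖ * ‖S⁻¹‖ * ‖h‖ := by
      calc ‖S⁻¹ * h * S⁻¹‖ ≤ (n:ℝ) * ‖S⁻¹ * h‖ * ‖S⁻¹‖ := b3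
        _ ≤ (n:ℝ) * ((n:ℝ) * ‖S⁻¹‖ * ‖h‖) * ‖S⁻¹‖ := by
            apply mul_le_mul_of_nonneg_right _ (norm_nonneg _)
            exact mul_le_mul_of_nonneg_left b4 hn0
        _ = (n:ℝ)^2 * ‖S⁻¹‖ * ‖S⁻¹‖ * ‖h‖ := by ring
    have c2 : ‖S⁻¹ * h * S⁻¹ * h‖ ≤ (n:ℝ)^3 * ‖S⁻¹‖ * ‖S⁻¹‖ * ‖h‖^2 := by
      calc ‖S⁻¹ * h * S⁻¹ * h‖ ≤ (n:ℝ) * ‖S⁻¹ * h * S⁻¹‖ * ‖h‖ := b2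
        _ ≤ (n:ℝ) * ((n:ℝ)^2 * ‖S⁻¹‖ * ‖S⁻¹‖ * ‖h‖) * ‖h‖ := by
            apply mul_le_mul_of_nonneg_right _ (norm_nonneg _)
            exact mul_le_mul_of_nonneg_left c3 hn0
        _ = (n:ℝ)^3 * ‖S⁻¹‖ * ‖S⁻¹‖ * ‖h‖^2 := by ring
    calc ‖S⁻¹ * h * S⁻¹ * h * (S + h)⁻¹‖
        ≤ (n:ℝ) * ‖S⁻¹ * h * S⁻¹ * h‖ * ‖(S + h)⁻¹‖ := b1
      _ ≤ (n:ℝ) * ((n:ℝ)^3 * ‖S⁻¹‖ * ‖S⁻¹‖ * ‖h‖^2) * (‖S⁻¹‖ + 1) := by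
          apply mul_le_mul _ h2 (norm_nonneg _) (by positivity)
          exact mul_le_mul_of_nonneg_left c2 hn0
      _ = (n:ℝ)^4 * ‖S⁻¹‖ * ‖S⁻¹‖ * (‖S⁻¹‖ + 1) * ‖h‖^2 := by ring
      _ ≤ (n:ℝ)^4 * ‖S⁻¹‖ * ‖S⁻¹‖ * (‖S⁻¹‖ + 1) * ‖(‖h‖^2)‖ := by
          rw [Real.norm_of_nonneg (by positivity)]
  exact hBO.trans_isLittleO (Asymptotics.isLittleO_norm_pow_id one_lt_two)

/-- `A ↦ A *ᵥ 𝟙` as a continuous linear map in the matrix. -/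
def mvCLM (n : ℕ) : Matrix (Fin n) (Fin n) ℝ →L[ℝ] (Fin n → ℝ) :=
  LinearMap.toContinuousLinearMap
    { toFun := fun A => A *ᵥ ones n
      map_add' := fun A B => Matrix.add_mulVec A B (ones n)
      map_smul' := fun c A => Matrix.smul_mulVec c A (ones n) }

@[simp] lemma mvCLM_apply (A : Matrix (Fin n) (Fin n) ℝ) : mvCLM n A = A *ᵥ ones n :=
  congrFun (LinearMap.coe_toContinuousLinearMap' _) A

/-- `v ↦ 𝟙 ⬝ᵥ v` as a continuous linear map. -/
def dotCLM (n : ℕ) : (Fin n → ℝ) →L[ℝ] ℝ :=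
  LinearMap.toContinuousLinearMap
    { toFun := fun v => ones n ⬝ᵥ v
      map_add' := by intro u v; simp [dotProduct_add]
      map_smul' := by intro c v; simp [dotProduct_smul] }

@[simp] lemma dotCLM_apply (v : Fin n → ℝ) : dotCLM n v = ones n ⬝ᵥ v :=
  congrFun (LinearMap.coe_toContinuousLinearMap' _) v

end GmvpAux

open GmvpAux

/-- The GMVP map `G : A ↦ A⁻¹𝟙 / (𝟙ᵀA⁻¹𝟙)` is Fréchet differentiable at a
symmetric positive definite `Σ`, with derivative in direction `H` given by
`D_Σ G [H] = −Σ⁻¹ H w + D (wᵀ H w) w`, where `D = 𝟙ᵀΣ⁻¹𝟙` and `w = Σ⁻¹𝟙 / D`. -/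
theorem gmvp_hasFDerivAt (n : ℕ) (hn : 1 ≤ n)
    (S : Matrix (Fin n) (Fin n) ℝ) (hS : S.PosDef) :
    ∃ L : Matrix (Fin n) (Fin n) ℝ →L[ℝ] (Fin n → ℝ),
      HasFDerivAt (gmvp n) L S ∧
        ∀ H : Matrix (Fin n) (Fin n) ℝ,
          L H = -(S⁻¹ *ᵥ (H *ᵥ gmvp n S)) +
            (Dcoef n S * (gmvp n S ⬝ᵥ (H *ᵥ gmvp n S))) • gmvp n S := by
  have hU : IsUnit S := hS.isUnit
  -- D > 0
  have hones : ones n ≠ 0 := by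
    intro h
    have := congrFun h ⟨0, hn⟩
    simp [ones] at this
  have hD : 0 < Dcoef n S := by
    have := hS.inv.dotProduct_mulVec_pos hones
    simpa [Dcoef, star_trivial] using this
  have hDne : Dcoef n S ≠ 0 := ne_of_gt hD
  -- derivative of f A = A⁻¹ *ᵥ 𝟙
  have hf : HasFDerivAt (fun A : Matrix (Fin n) (Fin n) ℝ => A⁻¹ *ᵥ ones n)
      ((mvCLM n).comp (invDeriv S)) S := by
    have := (mvCLM n).hasFDerivAt.comp S (matinv_hasFDerivAt S hU)
    have he : (⇑(mvCLM n) ∘ fun A : Matrix (Fin n) (Fin n) ℝ => A⁻¹) =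
        fun A : Matrix (Fin n) (Fin n) ℝ => A⁻¹ *ᵥ ones n := by
      funext A; simp [Function.comp]
    rwa [he] at this
  -- derivative of d A = 𝟙 ⬝ᵥ (A⁻¹ *ᵥ 𝟙) = Dcoef n A
  have hd : HasFDerivAt (fun A : Matrix (Fin n) (Fin n) ℝ => Dcoef n A)
      ((dotCLM n).comp ((mvCLM n).comp (invDeriv S))) S := by
    have := (dotCLM n).hasFDerivAt.comp S hf
    have he : (⇑(dotCLM n) ∘ fun A : Matrix (Fin n) (Fin n) ℝ => A⁻¹ *ᵥ ones n) =
        fun A : Matrix (Fin n) (Fin n) ℝ => Dcoef n A := by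
      funext A; simp [Function.comp, Dcoef]
    rwa [he] at this
  -- derivative of (d A)⁻¹
  have hdinv : HasFDerivAt (fun A : Matrix (Fin n) (Fin n) ℝ => (Dcoef n A)⁻¹)
      ((-(Dcoef n S ^ 2)⁻¹) • ((dotCLM n).comp ((mvCLM n).comp (invDeriv S)))) S :=
    ((hasDerivAt_inv hDne).comp_hasFDerivAt S hd : _)
  have hg := hdinv.smul hf
  refine ⟨_, hg, ?_⟩
  intro H
  have hw : gmvp n S = (Dcoef n S)⁻¹ • (S⁻¹ *ᵥ ones n) := rfl
  change (Dcoef n S)⁻¹ • (-(S⁻¹ * H * S⁻¹) *ᵥ ones n) +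
      ((-(Dcoef n S ^ 2)⁻¹) * (ones n ⬝ᵥ (-(S⁻¹ * H * S⁻¹) *ᵥ ones n))) • (S⁻¹ *ᵥ ones n) = _
  rw [hw]
  have hST : Sᵀ = S := by
    have := hS.1
    simpa [Matrix.IsHermitian, Matrix.conjTranspose_eq_transpose_of_trivial] using this
  have hsymm : (S⁻¹)ᵀ = S⁻¹ := by
    rw [Matrix.transpose_nonsing_inv, hST]
  have hdot : ones n ⬝ᵥ (S⁻¹ *ᵥ (H *ᵥ (S⁻¹ *ᵥ ones n))) =
      (S⁻¹ *ᵥ ones n) ⬝ᵥ (H *ᵥ (S⁻¹ *ᵥ ones n)) := by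
    rw [Matrix.dotProduct_mulVec]
    conv_lhs => rw [← hsymm]
    rw [Matrix.vecMul_transpose, hsymm]
  simp only [Matrix.mulVec_smul, smul_dotProduct, dotProduct_smul, smul_smul,
    smul_eq_mul, Matrix.neg_mulVec, ← Matrix.mulVec_mulVec, dotProduct_neg, mul_neg,
    neg_smul, neg_neg, smul_neg]
  rw [hdot]
  match_scalars
  · ring
  · field_simp

end
end

section
/- Let Σ be a symmetric positive definite n×n real matrix, 𝟙 ∈ ℝⁿ the all-ones vector, D = 𝟙ᵀΣ⁻¹𝟙, w = Σ⁻¹𝟙 / D, a = wᵀw, b = wᵀΣ⁻¹w, c = wᵀ(Σ⁻¹)²w, and R₂ = D² a (w ⊗ w)(w ⊗ w)ᵀ − D (w ⊗ Σ⁻¹w)(w ⊗ w)ᵀ − D (w ⊗ w)(w ⊗ Σ⁻¹w)ᵀ. Then R₂ acts on the pair {w ⊗ Σ⁻¹w, w ⊗ w} by R₂ (w ⊗ Σ⁻¹w) = −Dab (w ⊗ Σ⁻¹w) + (D²a²b − Dac)(w ⊗ w) and R₂ (w ⊗ w) = −Da² (w ⊗ Σ⁻¹w) + (D²a³ − Dab)(w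 ⊗ w); i.e., span{w ⊗ Σ⁻¹w, w ⊗ w} is R₂-invariant and the matrix of R₂ in the (ordered) spanning set {w ⊗ Σ⁻¹w, w ⊗ w} is [[−Dab, −Da²], [D²a²b−Dac, D²a³−Dab]]. -/
open Matrix
open scoped Kronecker

noncomputable section

/-- Kronecker product of two vectors in ℝⁿ, viewed as a vector in ℝ^{n²}
(indexed by `Fin n × Fin n`): `(u ⊗ v) (i,j) = u i * v j`. -/
def kronV {n : ℕ} (u v : Fin n → ℝ) : Fin n × Fin n → ℝ :=
  fun p => u p.1 * v p.2

/-- The decision-aware Jacobian `J = −wᵀ ⊗ Σ⁻¹ + D w (w ⊗ w)ᵀ` of the GMVP map,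
an n×n² matrix (with column index `Fin n × Fin n`). -/
def Jmat (n : ℕ) (S : Matrix (Fin n) (Fin n) ℝ) : Matrix (Fin n) (Fin n × Fin n) ℝ :=
  -(Matrix.reindex (Equiv.punitProd (Fin n)) (Equiv.refl (Fin n × Fin n))
      (Matrix.replicateRow Unit (gmvp n S) ⊗ₖ S⁻¹)) +
    Dcoef n S • Matrix.vecMulVec (gmvp n S) (kronV (gmvp n S) (gmvp n S))

/-- `R₂ = D² a (w⊗w)(w⊗w)ᵀ − D (w⊗Σ⁻¹w)(w⊗w)ᵀ − D (w⊗w)(w⊗Σ⁻¹w)ᵀ`, the low-rank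
part of `Jᵀ J`, where `a = wᵀw`. -/
def R2 (n : ℕ) (S : Matrix (Fin n) (Fin n) ℝ) :
    Matrix (Fin n × Fin n) (Fin n × Fin n) ℝ :=
  ((Dcoef n S) ^ 2 * (gmvp n S ⬝ᵥ gmvp n S)) •
      vecMulVec (kronV (gmvp n S) (gmvp n S)) (kronV (gmvp n S) (gmvp n S)) -
    Dcoef n S •
      vecMulVec (kronV (gmvp n S) (S⁻¹ *ᵥ gmvp n S)) (kronV (gmvp n S) (gmvp n S)) -
    Dcoef n S •
      vecMulVec (kronV (gmvp n S) (gmvp n S)) (kronV (gmvp n S) (S⁻¹ *ᵥ gmvp n S))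

/-- `R₂` leaves `span{w ⊗ Σ⁻¹w, w ⊗ w}` invariant, acting by
`R₂ (w ⊗ Σ⁻¹w) = −Dab (w ⊗ Σ⁻¹w) + (D²a²b − Dac)(w ⊗ w)` and
`R₂ (w ⊗ w) = −Da² (w ⊗ Σ⁻¹w) + (D²a³ − Dab)(w ⊗ w)`,
i.e. its matrix in the ordered spanning set `{w ⊗ Σ⁻¹w, w ⊗ w}` is
`[[−Dab, −Da²], [D²a²b−Dac, D²a³−Dab]]`. -/
theorem R2_action_on_span (n : ℕ) (hn : 1 ≤ n)
    (S : Matrix (Fin n) (Fin n) ℝ) (hS : S.PosDef)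
    (D a b c : ℝ) (hD : D = Dcoef n S)
    (ha : a = gmvp n S ⬝ᵥ gmvp n S)
    (hb : b = gmvp n S ⬝ᵥ (S⁻¹ *ᵥ gmvp n S))
    (hc : c = gmvp n S ⬝ᵥ ((S⁻¹ ^ 2) *ᵥ gmvp n S)) :
    R2 n S *ᵥ kronV (gmvp n S) (S⁻¹ *ᵥ gmvp n S) =
        (-(D * a * b)) • kronV (gmvp n S) (S⁻¹ *ᵥ gmvp n S) +
          (D ^ 2 * a ^ 2 * b - D * a * c) • kronV (gmvp n S) (gmvp n S) ∧
      R2 n S *ᵥ kronV (gmvp n S) (gmvp n S) =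
        (-(D * a ^ 2)) • kronV (gmvp n S) (S⁻¹ *ᵥ gmvp n S) +
          (D ^ 2 * a ^ 3 - D * a * b) • kronV (gmvp n S) (gmvp n S) := by
  have hdot : ∀ u v u' v' : Fin n → ℝ,
      kronV u v ⬝ᵥ kronV u' v' = (u ⬝ᵥ u') * (v ⬝ᵥ v') := by
    intro u v u' v'
    simp only [kronV, dotProduct, Fintype.sum_prod_type]
    rw [Finset.sum_mul_sum]
    exact Finset.sum_congr rfl fun i _ => Finset.sum_congr rfl fun j _ => by ring
  have hmv : ∀ (u x y : Fin n × Fin n → ℝ),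
      vecMulVec u x *ᵥ y = (x ⬝ᵥ y) • u := by
    intro u x y
    funext p
    simp only [vecMulVec, mulVec, dotProduct, of_apply, Pi.smul_apply, smul_eq_mul,
      Finset.mul_sum, Finset.sum_mul]
    exact Finset.sum_congr rfl fun i _ => by ring
  have hsymm : S⁻¹ᵀ = S⁻¹ := by
    rw [Matrix.transpose_nonsing_inv]
    congr 1
    simpa using hS.isHermitian.eq
  have hvv : (S⁻¹ *ᵥ gmvp n S) ⬝ᵥ (S⁻¹ *ᵥ gmvp n S) = c := by
    rw [hc, show (S⁻¹ ^ 2 : Matrix (Fin n) (Fin n) ℝ) = S⁻¹ * S⁻¹ from sq S⁻¹,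
      ← Matrix.mulVec_mulVec, Matrix.dotProduct_mulVec (gmvp n S) S⁻¹,
      ← Matrix.vecMul_transpose, hsymm]
  have hwv : gmvp n S ⬝ᵥ (S⁻¹ *ᵥ gmvp n S) = b := hb.symm
  have hvw : (S⁻¹ *ᵥ gmvp n S) ⬝ᵥ gmvp n S = b := by rw [dotProduct_comm]; exact hb.symm
  have hww : gmvp n S ⬝ᵥ gmvp n S = a := ha.symm
  constructor
  · rw [R2, Matrix.sub_mulVec, Matrix.sub_mulVec, Matrix.smul_mulVec,
      Matrix.smul_mulVec, Matrix.smul_mulVec, hmv, hmv, hmv]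
    simp only [hdot, hwv, hww, hvv]
    rw [← hD]
    funext p
    simp only [Pi.add_apply, Pi.sub_apply, Pi.smul_apply, smul_eq_mul]
    ring
  · rw [R2, Matrix.sub_mulVec, Matrix.sub_mulVec, Matrix.smul_mulVec,
      Matrix.smul_mulVec, Matrix.smul_mulVec, hmv, hmv, hmv]
    simp only [hdot, hww, hvw]
    rw [← hD]
    funext p
    simp only [Pi.add_apply, Pi.sub_apply, Pi.smul_apply, smul_eq_mul]
    ring

end
end

section
/- Let Σ be a symmetric positive definite n×n real matrix, 𝟙 ∈ ℝⁿ the all-ones vector, D = 𝟙ᵀΣ⁻¹𝟙, w = Σ⁻¹𝟙 / D, a = wᵀw, b = wᵀΣ⁻¹w, c = wᵀ(Σ⁻¹)²w, and R₁ = D² a² w wᵀ − D a (Σ⁻¹ w wᵀ + w wᵀ Σ⁻¹). Suppose D²a²b − Dac ≠ 0 and λ ∈ ℝ satisfies λ² − (D²a³ − 2Dab) λ + D²a²(b² − ac) = 0. Then the vector x(λ) = w + ((λ − (D²a³ − Dab)) / (D²a²b − Dac)) Σ⁻¹w satisfies R₁ x(λ) = λ x(λ). -/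
open Matrix
open scoped Kronecker

noncomputable section

/-- `R₁ = D² a² w wᵀ − D a (Σ⁻¹ w wᵀ + w wᵀ Σ⁻¹)`, the low-rank part of `J Jᵀ`,
where `a = wᵀw`. -/
def R1 (n : ℕ) (S : Matrix (Fin n) (Fin n) ℝ) : Matrix (Fin n) (Fin n) ℝ :=
  ((Dcoef n S) ^ 2 * (gmvp n S ⬝ᵥ gmvp n S) ^ 2) • vecMulVec (gmvp n S) (gmvp n S) -
    (Dcoef n S * (gmvp n S ⬝ᵥ gmvp n S)) •
      (S⁻¹ * vecMulVec (gmvp n S) (gmvp n S) + vecMulVec (gmvp n S) (gmvp n S) * S⁻¹)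

lemma vecMulVec_mulVec' {n : ℕ} (u v x : Fin n → ℝ) :
    vecMulVec u v *ᵥ x = (v ⬝ᵥ x) • u := by
  funext i
  simp only [Matrix.mulVec, Matrix.vecMulVec_apply, dotProduct, Pi.smul_apply,
    smul_eq_mul, Matrix.of_apply]
  rw [Finset.sum_mul]
  exact Finset.sum_congr rfl fun j _ => by ring

/-- If `D²a²b − Dac ≠ 0` and `λ` is a root of the shared characteristic polynomial
`λ² − (D²a³ − 2Dab) λ + D²a²(b² − ac)`, then
`x(λ) = w + ((λ − (D²a³ − Dab)) / (D²a²b − Dac)) Σ⁻¹w` is an eigenvector of `R₁`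
with eigenvalue `λ`. -/
theorem R1_eigenvector (n : ℕ) (hn : 1 ≤ n)
    (S : Matrix (Fin n) (Fin n) ℝ) (hS : S.PosDef)
    (D a b c : ℝ) (hD : D = Dcoef n S)
    (ha : a = gmvp n S ⬝ᵥ gmvp n S)
    (hb : b = gmvp n S ⬝ᵥ (S⁻¹ *ᵥ gmvp n S))
    (hc : c = gmvp n S ⬝ᵥ ((S⁻¹ ^ 2) *ᵥ gmvp n S))
    (hne : D ^ 2 * a ^ 2 * b - D * a * c ≠ 0)
    (lam : ℝ)
    (hlam : lam ^ 2 - (D ^ 2 * a ^ 3 - 2 * D * a * b) * lam +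
        D ^ 2 * a ^ 2 * (b ^ 2 - a * c) = 0) :
    R1 n S *ᵥ
        (gmvp n S +
          ((lam - (D ^ 2 * a ^ 3 - D * a * b)) / (D ^ 2 * a ^ 2 * b - D * a * c)) •
            (S⁻¹ *ᵥ gmvp n S)) =
      lam •
        (gmvp n S +
          ((lam - (D ^ 2 * a ^ 3 - D * a * b)) / (D ^ 2 * a ^ 2 * b - D * a * c)) •
            (S⁻¹ *ᵥ gmvp n S)) := by
  have hsymm : S⁻¹ᵀ = S⁻¹ := by
    have h := hS.1.inv
    simpa [Matrix.IsHermitian, Matrix.conjTranspose_eq_transpose_of_trivial] using h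
  set w := gmvp n S with hw
  set u := S⁻¹ *ᵥ w with hu
  set t := (lam - (D ^ 2 * a ^ 3 - D * a * b)) / (D ^ 2 * a ^ 2 * b - D * a * c) with ht
  set x := w + t • u with hx
  have hwu : w ⬝ᵥ u = b := hb.symm
  have hww : w ⬝ᵥ w = a := ha.symm
  have huw : u ⬝ᵥ w = b := by rw [dotProduct_comm]; exact hb.symm
  have huu : u ⬝ᵥ u = c := by
    rw [hu, dotProduct_mulVec, ← mulVec_transpose, hsymm, mulVec_mulVec, ← pow_two,
      dotProduct_comm, ← hc]
  have hsx : ∀ y : Fin n → ℝ, w ⬝ᵥ (S⁻¹ *ᵥ y) = u ⬝ᵥ y := by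
    intro y
    rw [dotProduct_mulVec, ← mulVec_transpose, hsymm, ← hu]
  have key : R1 n S *ᵥ x =
      (D ^ 2 * a ^ 2 * (w ⬝ᵥ x) - D * a * (u ⬝ᵥ x)) • w - (D * a * (w ⬝ᵥ x)) • u := by
    rw [R1, ← hD, ← ha, ← hw, sub_mulVec, smul_mulVec, smul_mulVec,
      add_mulVec, ← mulVec_mulVec, ← mulVec_mulVec, vecMulVec_mulVec', vecMulVec_mulVec',
      mulVec_smul, hsx]
    rw [show (S⁻¹ *ᵥ w) = u from rfl]
    module
  have htK : t * (D ^ 2 * a ^ 2 * b - D * a * c) = lam - (D ^ 2 * a ^ 3 - D * a * b) :=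
    div_mul_cancel₀ _ hne
  have hwx : w ⬝ᵥ x = a + t * b := by
    rw [hx, dotProduct_add, dotProduct_smul, hww, hwu, smul_eq_mul]
  have hux : u ⬝ᵥ x = b + t * c := by
    rw [hx, dotProduct_add, dotProduct_smul, huw, huu, smul_eq_mul]
  have c1 : D ^ 2 * a ^ 2 * (w ⬝ᵥ x) - D * a * (u ⬝ᵥ x) = lam := by
    rw [hwx, hux]; linear_combination htK
  have c2 : D * a * (w ⬝ᵥ x) = -(lam * t) := by
    rw [hwx]
    have h0 : (lam * t + D * a * b * t + D * a ^ 2) * (D ^ 2 * a ^ 2 * b - D * a * c) = 0 := by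
      linear_combination (lam + D * a * b) * htK + hlam
    have h1 : lam * t + D * a * b * t + D * a ^ 2 = 0 :=
      (mul_eq_zero.mp h0).resolve_right hne
    linear_combination h1
  rw [key, c1, c2, neg_smul, sub_neg_eq_add, hx]
  module

end
end

section
/- Let Σ be a symmetric positive definite n×n real matrix, 𝟙 ∈ ℝⁿ the all-ones vector, D = 𝟙ᵀΣ⁻¹𝟙, w = Σ⁻¹𝟙 / D, and let Σ_true be a symmetric n×n real matrix. The regret map L : A ↦ w*(A)ᵀ Σ_true w*(A), where w*(A) = A⁻¹𝟙 / (𝟙ᵀA⁻¹𝟙), is Fréchet differentiable at Σ, and its derivative in an arbitrary direction H (an n×n matrix) equals the chain-rule composition D_Σ L [H] = (2 Σ_true w)ᵀ ( −Σ⁻¹ H w + D (wᵀ H w) w ). -/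
open Matrix

noncomputable section

attribute [local instance] Matrix.normedAddCommGroup Matrix.normedSpace

/-- Type synonym for square matrices with the `L∞` operator norm. -/
def MatL (n : ℕ) : Type := Matrix (Fin n) (Fin n) ℝ

namespace MatL
variable {n : ℕ}
instance : NormedRing (MatL n) := Matrix.linftyOpNormedRing
instance : NormedAlgebra ℝ (MatL n) := Matrix.linftyOpNormedAlgebra

def toMat : MatL n ≃ₗ[ℝ] Matrix (Fin n) (Fin n) ℝ where
  toFun A := A
  invFun A := A
  map_add' _ _ := rfl
  map_smul' _ _ := rfl
  left_inv _ := rfl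
  right_inv _ := rfl

instance : FiniteDimensional ℝ (MatL n) := Module.Finite.equiv (toMat (n := n)).symm
instance : CompleteSpace (MatL n) := FiniteDimensional.complete ℝ _
end MatL

def eqv (n : ℕ) : Matrix (Fin n) (Fin n) ℝ ≃L[ℝ] MatL n :=
  (MatL.toMat (n := n)).symm.toContinuousLinearEquiv

/-- derivative of matrix inversion as a CLM -/
def invDeriv {n : ℕ} (S : Matrix (Fin n) (Fin n) ℝ) :
    Matrix (Fin n) (Fin n) ℝ →L[ℝ] Matrix (Fin n) (Fin n) ℝ :=
  LinearMap.toContinuousLinearMap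
    { toFun := fun H => -(S⁻¹ * H * S⁻¹)
      map_add' := by intro a b; simp [mul_add, add_mul]; abel
      map_smul' := by intro c a; simp [Matrix.mul_smul, Matrix.smul_mul] }

@[simp] lemma invDeriv_apply {n : ℕ} (S H : Matrix (Fin n) (Fin n) ℝ) :
    invDeriv S H = -(S⁻¹ * H * S⁻¹) := rfl

theorem hasFDerivAt_matrix_inv {n : ℕ} (S : Matrix (Fin n) (Fin n) ℝ)
    (hdet : IsUnit S.det) :
    HasFDerivAt (fun A : Matrix (Fin n) (Fin n) ℝ => A⁻¹) (invDeriv S) S := by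
  let U : (MatL n)ˣ :=
    { val := S
      inv := (S⁻¹ : Matrix (Fin n) (Fin n) ℝ)
      val_inv := Matrix.mul_nonsing_inv S hdet
      inv_val := Matrix.nonsing_inv_mul S hdet }
  have h1 : HasFDerivAt (Ring.inverse : MatL n → MatL n)
      (-(ContinuousLinearMap.mulLeftRight ℝ (MatL n) ↑U⁻¹ ↑U⁻¹)) ↑U :=
    hasFDerivAt_ringInverse U
  have h2 := ((eqv n).symm.hasFDerivAt.comp (x := S) (h1.comp (x := S) (eqv n).hasFDerivAt))
  have hfun : (fun A : Matrix (Fin n) (Fin n) ℝ =>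
      (eqv n).symm (Ring.inverse (eqv n A))) = fun A => A⁻¹ := by
    funext A
    exact (Matrix.nonsing_inv_eq_ringInverse A).symm
  simp only [Function.comp_def] at h2
  erw [hfun] at h2
  convert h2 using 1 <;> rfl

/-- The regret map `L : A ↦ w*(A)ᵀ Σ_true w*(A)` is Fréchet differentiable at a
symmetric positive definite `Σ`, and its derivative in direction `H` equals the
chain-rule composition `D_Σ L [H] = (2 Σ_true w)ᵀ (−Σ⁻¹ H w + D (wᵀ H w) w)`,
where `D = 𝟙ᵀΣ⁻¹𝟙` and `w = Σ⁻¹𝟙 / D`. -/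
theorem regret_hasFDerivAt (n : ℕ) (hn : 1 ≤ n)
    (S : Matrix (Fin n) (Fin n) ℝ) (hS : S.PosDef)
    (Strue : Matrix (Fin n) (Fin n) ℝ) (hStrue : Strue.IsSymm) :
    ∃ L : Matrix (Fin n) (Fin n) ℝ →L[ℝ] ℝ,
      HasFDerivAt (fun A : Matrix (Fin n) (Fin n) ℝ =>
          gmvp n A ⬝ᵥ (Strue *ᵥ gmvp n A)) L S ∧
        ∀ H : Matrix (Fin n) (Fin n) ℝ,
          L H = ((2 : ℝ) • (Strue *ᵥ gmvp n S)) ⬝ᵥ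
            (-(S⁻¹ *ᵥ (H *ᵥ gmvp n S)) +
              (Dcoef n S * (gmvp n S ⬝ᵥ (H *ᵥ gmvp n S))) • gmvp n S) := by
  classical
  have hdet : IsUnit S.det := hS.det_pos.ne'.isUnit
  have hinv := hasFDerivAt_matrix_inv S hdet
  let mv : Matrix (Fin n) (Fin n) ℝ →L[ℝ] (Fin n → ℝ) :=
    LinearMap.toContinuousLinearMap
      { toFun := fun M => M *ᵥ ones n
        map_add' := fun M N => Matrix.add_mulVec M N (ones n)
        map_smul' := fun c M => Matrix.smul_mulVec c M (ones n) }
  let dOnes : (Fin n → ℝ) →L[ℝ] ℝ :=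
    LinearMap.toContinuousLinearMap
      { toFun := fun v => ones n ⬝ᵥ v
        map_add' := fun a b => dotProduct_add _ a b
        map_smul' := fun c a => dotProduct_smul c (ones n) a }
  let qf : (Fin n → ℝ) →L[ℝ] (Fin n → ℝ) →L[ℝ] ℝ :=
    LinearMap.toContinuousLinearMap
      { toFun := fun v => LinearMap.toContinuousLinearMap
          { toFun := fun x => v ⬝ᵥ (Strue *ᵥ x)
            map_add' := by intro a b; simp [Matrix.mulVec_add, dotProduct_add]
            map_smul' := by intro c a; simp [Matrix.mulVec_smul, dotProduct_smul] }
        map_add' := by intro a b; ext x; simp [add_dotProduct]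
        map_smul' := by intro c a; ext x; simp [smul_dotProduct] }
  have hu : HasFDerivAt (fun A : Matrix (Fin n) (Fin n) ℝ => A⁻¹ *ᵥ ones n)
      (mv.comp (invDeriv S)) S := mv.hasFDerivAt.comp S hinv
  have hd : HasFDerivAt (fun A : Matrix (Fin n) (Fin n) ℝ => ones n ⬝ᵥ (A⁻¹ *ᵥ ones n))
      (dOnes.comp (mv.comp (invDeriv S))) S := dOnes.hasFDerivAt.comp S hu
  have hqc : HasFDerivAt (fun A : Matrix (Fin n) (Fin n) ℝ =>
      qf (A⁻¹ *ᵥ ones n)) (qf.comp (mv.comp (invDeriv S))) S := qf.hasFDerivAt.comp S hu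
  have hN : HasFDerivAt (fun A : Matrix (Fin n) (Fin n) ℝ =>
      (A⁻¹ *ᵥ ones n) ⬝ᵥ (Strue *ᵥ (A⁻¹ *ᵥ ones n)))
      ((show Matrix (Fin n) (Fin n) ℝ →L[ℝ] ℝ from (qf (S⁻¹ *ᵥ ones n)).comp (mv.comp (invDeriv S))) +
        (show Matrix (Fin n) (Fin n) ℝ →L[ℝ] ℝ from (qf.comp (mv.comp (invDeriv S))).flip (S⁻¹ *ᵥ ones n))) S :=
    hqc.clm_apply hu
  have hones : (ones n : Fin n → ℝ) ≠ 0 := by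
    intro h
    have := congrFun h ⟨0, hn⟩
    simp [ones] at this
  have hDpos : 0 < ones n ⬝ᵥ (S⁻¹ *ᵥ ones n) := by
    have := (hS.inv).dotProduct_mulVec_pos hones
    simpa using this
  have hD : ones n ⬝ᵥ (S⁻¹ *ᵥ ones n) ≠ 0 := ne_of_gt hDpos
  have hDD : (ones n ⬝ᵥ (S⁻¹ *ᵥ ones n)) * (ones n ⬝ᵥ (S⁻¹ *ᵥ ones n)) ≠ 0 :=
    mul_ne_zero hD hD
  have hmul := hd.mul hd
  have hg := (hasFDerivAt_inv' (𝕜 := ℝ) hDD).comp S hmul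
  have hf := hg.mul hN
  have heq : (fun A : Matrix (Fin n) (Fin n) ℝ => gmvp n A ⬝ᵥ (Strue *ᵥ gmvp n A)) =
      fun A => (Inv.inv ∘ fun A : Matrix (Fin n) (Fin n) ℝ =>
          (ones n ⬝ᵥ (A⁻¹ *ᵥ ones n)) * (ones n ⬝ᵥ (A⁻¹ *ᵥ ones n))) A *
        ((A⁻¹ *ᵥ ones n) ⬝ᵥ (Strue *ᵥ (A⁻¹ *ᵥ ones n))) := by
    funext A
    simp only [Function.comp, gmvp, Dcoef, smul_dotProduct, dotProduct_smul,
      Matrix.mulVec_smul, smul_eq_mul, mul_inv]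
    ring
  refine ⟨_, by rw [heq]; exact hf, ?_⟩
  intro H
  change ((ones n ⬝ᵥ (S⁻¹ *ᵥ ones n)) * (ones n ⬝ᵥ (S⁻¹ *ᵥ ones n)))⁻¹ * ((S⁻¹ *ᵥ ones n) ⬝ᵥ (Strue *ᵥ (-(S⁻¹ * H * S⁻¹) *ᵥ ones n)) + (-(S⁻¹ * H * S⁻¹) *ᵥ ones n) ⬝ᵥ (Strue *ᵥ (S⁻¹ *ᵥ ones n))) +
      ((S⁻¹ *ᵥ ones n) ⬝ᵥ (Strue *ᵥ (S⁻¹ *ᵥ ones n))) * (-(((ones n ⬝ᵥ (S⁻¹ *ᵥ ones n)) * (ones n ⬝ᵥ (S⁻¹ *ᵥ ones n)))⁻¹ *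
        ((ones n ⬝ᵥ (S⁻¹ *ᵥ ones n)) * (ones n ⬝ᵥ (-(S⁻¹ * H * S⁻¹) *ᵥ ones n)) + (ones n ⬝ᵥ (S⁻¹ *ᵥ ones n)) * (ones n ⬝ᵥ (-(S⁻¹ * H * S⁻¹) *ᵥ ones n))) * ((ones n ⬝ᵥ (S⁻¹ *ᵥ ones n)) * (ones n ⬝ᵥ (S⁻¹ *ᵥ ones n)))⁻¹)) = _
  simp only [ContinuousLinearMap.add_apply, ContinuousLinearMap.coe_comp', Function.comp_apply,
    ContinuousLinearMap.coe_smul', Pi.smul_apply, ContinuousLinearMap.flip_apply,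
    ContinuousLinearMap.mulLeftRight_apply, invDeriv_apply,
    LinearMap.coe_toContinuousLinearMap', LinearMap.coe_mk, AddHom.coe_mk, smul_eq_mul,
    mv, dOnes, qf, gmvp, Dcoef]
  simp only [Matrix.neg_mulVec, Matrix.mulVec_neg, neg_dotProduct, dotProduct_neg,
    ← Matrix.mulVec_mulVec, Matrix.mulVec_smul, smul_dotProduct, dotProduct_smul,
    dotProduct_add, add_dotProduct, smul_eq_mul,
    ContinuousLinearMap.neg_apply, ContinuousLinearMap.mulLeftRight_apply]
  have hSsymm : S⁻¹ᵀ = S⁻¹ := by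
    rw [Matrix.transpose_nonsing_inv]
    rw [← Matrix.conjTranspose_eq_transpose_of_trivial, hS.1.eq]
  have hTsym : ∀ v x : Fin n → ℝ, v ⬝ᵥ (Strue *ᵥ x) = (Strue *ᵥ v) ⬝ᵥ x := by
    intro v x
    rw [Matrix.dotProduct_mulVec]
    conv_lhs => rw [← hStrue]
    rw [Matrix.vecMul_transpose]
  have hIsym : ∀ v x : Fin n → ℝ, v ⬝ᵥ (S⁻¹ *ᵥ x) = (S⁻¹ *ᵥ v) ⬝ᵥ x := by
    intro v x
    rw [Matrix.dotProduct_mulVec]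
    conv_lhs => rw [← hSsymm]
    rw [Matrix.vecMul_transpose]
  set w : Fin n → ℝ := S⁻¹ *ᵥ ones n with hw
  have hA1 : w ⬝ᵥ (Strue *ᵥ (S⁻¹ *ᵥ (H *ᵥ w))) = (Strue *ᵥ w) ⬝ᵥ (S⁻¹ *ᵥ (H *ᵥ w)) :=
    hTsym _ _
  have hA2 : (S⁻¹ *ᵥ (H *ᵥ w)) ⬝ᵥ (Strue *ᵥ w) = (Strue *ᵥ w) ⬝ᵥ (S⁻¹ *ᵥ (H *ᵥ w)) :=
    dotProduct_comm _ _
  have hB : ones n ⬝ᵥ (S⁻¹ *ᵥ (H *ᵥ w)) = w ⬝ᵥ (H *ᵥ w) := hIsym _ _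
  have hF : (Strue *ᵥ w) ⬝ᵥ w = w ⬝ᵥ (Strue *ᵥ w) := dotProduct_comm _ _
  rw [hA1, hA2, hB, hF]
  field_simp
  ring

end
end
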